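/- arXiv:1706.00824 — 5 statements merged into one kernel-verified Lean document; each statement's English description precedes it below -/
import Mathlib

section
/- Let (Ω, P) be a probability space carrying an i.i.d. sequence ε₁, ε₂, … of standard Gaussian random variables, and define the AR(1) process X₀ = x₀ ∈ ℝ, Xₙ = μ₀ + λ₀Xₙ₋₁ + εₙ for n ≥ 1, where |λ₀| < 1. Let g(x, y) := (x − ½[y(λ₀+λ∞) + (μ₀+μ∞)])·[y(λ₀−λ∞) + (μ₀−μ∞)] be the instantaneous log-likelihood ratio between the post-change AR(1) parameters (μ₀, λ₀) and pre-change parameters (μ∞, λ∞), with |λ∞| < 1. Then (1/n)·∑_{i=1}^{n} E[g(Xᵢ, Xᵢ₋₁)] converges, as n → ∞, to K := (λ₀−λ∞)²/(2(1−λ₀²)) + ((1−λ∞)²/2)·(μ₀/(1−λ₀) − μ∞/(1−λ∞))². -/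
open MeasureTheory ProbabilityTheory Filter Topology

section AuxGauss
open Real Set
open scoped ENNReal NNReal

lemma aux_two_mul_le_exp {t : ℝ} (ht : 0 ≤ t) : 2 * t ≤ Real.exp t := by
  nlinarith [Real.quadratic_le_exp_of_nonneg ht, sq_nonneg (t - 1)]

lemma integrable_sq_mul_exp_neg :
    Integrable (fun x : ℝ => x ^ 2 * Real.exp (-(2⁻¹ : ℝ) * x ^ 2)) := by
  refine ((integrable_exp_neg_mul_sq (by norm_num : (0:ℝ) < 4⁻¹)).const_mul 2).mono'
    ?_ (ae_of_all _ fun x => ?_)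
  · exact ((continuous_pow 2).mul
      (Real.continuous_exp.comp (by continuity))).aestronglyMeasurable
  · have ht : (0:ℝ) ≤ 4⁻¹ * x ^ 2 := by positivity
    have h2 : x ^ 2 ≤ 2 * Real.exp (4⁻¹ * x ^ 2) := by
      have := aux_two_mul_le_exp ht; nlinarith
    have h3 := mul_le_mul_of_nonneg_right h2 (Real.exp_nonneg (-(2⁻¹:ℝ) * x ^ 2))
    have h4 : 2 * Real.exp (4⁻¹ * x ^ 2) * Real.exp (-(2⁻¹:ℝ) * x ^ 2)
        = 2 * Real.exp (-(4⁻¹:ℝ) * x ^ 2) := by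
      rw [mul_assoc, ← Real.exp_add]; ring_nf
    rw [Real.norm_eq_abs, abs_of_nonneg (by positivity)]
    linarith [h3, h4.le, h4.ge]

lemma gaussianPDFReal_zero_one (x : ℝ) :
    gaussianPDFReal 0 1 x = (Real.sqrt (2 * π))⁻¹ * Real.exp (-(2⁻¹:ℝ) * x ^ 2) := by
  rw [gaussianPDFReal]
  congr 1
  · norm_num
  · congr 1
    push_cast
    ring

lemma gauss_density_integral (f : ℝ → ℝ) :
    ∫ x, f x ∂(gaussianReal 0 1) = ∫ x, gaussianPDFReal 0 1 x * f x := by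
  rw [gaussianReal_of_var_ne_zero 0 one_ne_zero]
  have h1 : (gaussianPDF 0 1) = fun x => ((gaussianPDFReal 0 1 x).toNNReal : ℝ≥0∞) := rfl
  rw [h1, integral_withDensity_eq_integral_smul
    (f := fun x => (gaussianPDFReal 0 1 x).toNNReal)
    (measurable_real_toNNReal.comp (measurable_gaussianPDFReal 0 1)) f]
  congr 1
  funext x
  rw [NNReal.smul_def, smul_eq_mul, Real.coe_toNNReal _ (gaussianPDFReal_nonneg 0 1 x)]

lemma gauss_mean : ∫ x, x ∂(gaussianReal 0 1) = 0 := by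
  rw [gauss_density_integral]
  set f : ℝ → ℝ := fun x => gaussianPDFReal 0 1 x * x with hf
  have hodd : (fun x => f (-x)) = fun x => - f x := by
    funext x
    simp only [hf, gaussianPDFReal_zero_one]
    ring_nf
  have h1 : ∫ x, f (-x) = ∫ x, f x := integral_neg_eq_self f volume
  rw [hodd, integral_neg] at h1
  linarith

lemma gauss_sq_integral : ∫ x : ℝ, x ^ 2 * Real.exp (-(2⁻¹:ℝ) * x ^ 2) = Real.sqrt (2 * π) := by
  have habs : ∫ x : ℝ, x ^ 2 * Real.exp (-(2⁻¹:ℝ) * x ^ 2)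
      = 2 * ∫ x in Ioi (0:ℝ), x ^ 2 * Real.exp (-(2⁻¹:ℝ) * x ^ 2) := by
    rw [← integral_comp_abs (f := fun x => x ^ 2 * Real.exp (-(2⁻¹:ℝ) * x ^ 2))]
    congr 1
    funext x
    rw [sq_abs]
  rw [habs]
  have hfun : ∀ x ∈ Ioi (0:ℝ), x ^ 2 * Real.exp (-(2⁻¹:ℝ) * x ^ 2)
      = x ^ (2:ℝ) * Real.exp (-(2⁻¹:ℝ) * x ^ (2:ℝ)) := by
    intro x _
    rw [show ((2:ℝ)) = ((2:ℕ):ℝ) by norm_num, Real.rpow_natCast]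
  rw [setIntegral_congr_fun measurableSet_Ioi hfun,
    integral_rpow_mul_exp_neg_mul_rpow (by norm_num) (by norm_num) (by norm_num : (0:ℝ) < 2⁻¹)]
  have hG : Real.Gamma ((2 + 1) / 2) = (1/2) * Real.sqrt π := by
    rw [show ((2:ℝ) + 1)/2 = 1/2 + 1 by norm_num, Real.Gamma_add_one (by norm_num),
      Real.Gamma_one_half_eq]
  rw [hG]
  have hb : (2⁻¹:ℝ) ^ (-((2:ℝ) + 1) / 2) = 2 * Real.sqrt 2 := by
    rw [show (-((2:ℝ)+1)/2) = -(3/2) by norm_num,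
      Real.inv_rpow (by norm_num : (0:ℝ) ≤ 2), ← Real.rpow_neg (by norm_num : (0:ℝ) ≤ 2),
      neg_neg, show ((3:ℝ)/2) = 1 + 1/2 by norm_num,
      Real.rpow_add (by norm_num : (0:ℝ) < 2), Real.rpow_one, ← Real.sqrt_eq_rpow]
  rw [hb, Real.sqrt_mul (by norm_num : (0:ℝ) ≤ 2)]
  ring

lemma gauss_sq : ∫ x, x ^ 2 ∂(gaussianReal 0 1) = 1 := by
  rw [gauss_density_integral]
  have h1 : (fun x => gaussianPDFReal 0 1 x * x ^ 2)
      = fun x => (Real.sqrt (2 * π))⁻¹ * (x ^ 2 * Real.exp (-(2⁻¹:ℝ) * x ^ 2)) := by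
    funext x; rw [gaussianPDFReal_zero_one]; ring
  rw [h1, integral_const_mul, gauss_sq_integral,
    inv_mul_cancel₀ (Real.sqrt_ne_zero'.mpr (by positivity))]

lemma gauss_memℒp_two : MemLp (id : ℝ → ℝ) 2 (gaussianReal 0 1) := by
  rw [memLp_two_iff_integrable_sq aestronglyMeasurable_id]
  rw [gaussianReal_of_var_ne_zero 0 one_ne_zero,
    integrable_withDensity_iff (measurable_gaussianPDF 0 1)
      (ae_of_all _ fun x => ENNReal.ofReal_lt_top)]
  have h1 : (fun x : ℝ => (id x) ^ 2 * (gaussianPDF 0 1 x).toReal)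
      = fun x => (Real.sqrt (2 * π))⁻¹ * (x ^ 2 * Real.exp (-(2⁻¹:ℝ) * x ^ 2)) := by
    funext x
    rw [id, gaussianPDF, ENNReal.toReal_ofReal (gaussianPDFReal_nonneg 0 1 x),
      gaussianPDFReal_zero_one]
    ring
  rw [h1]
  exact integrable_sq_mul_exp_neg.const_mul _


end AuxGauss

/-- For the AR(1) process `X₀ = x₀`, `Xₙ = μ₀ + λ₀ Xₙ₋₁ + εₙ` driven by i.i.d. standard
Gaussian noise (post-change dynamics), with `|λ₀| < 1` and `|λ∞| < 1`, the Cesàro averages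
`(1/n) ∑_{i=1}^n E[g(Xᵢ, Xᵢ₋₁)]` of the expected instantaneous log-likelihood ratios
`g(x, y) = (x - ½[y(λ₀+λ∞) + (μ₀+μ∞)])·[y(λ₀-λ∞) + (μ₀-μ∞)]` converge to the
Kullback--Leibler number
`K = (λ₀-λ∞)²/(2(1-λ₀²)) + ((1-λ∞)²/2)·(μ₀/(1-λ₀) - μ∞/(1-λ∞))²`. -/
theorem ar1_kl_number
    {Ω : Type*} [MeasurableSpace Ω] {P : Measure Ω} [IsProbabilityMeasure P]
    {ε : ℕ → Ω → ℝ} (hmeas : ∀ n, Measurable (ε n))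
    (hindep : iIndepFun ε P)
    (hgauss : ∀ n, P.map (ε n) = gaussianReal 0 1)
    (x₀ μ₀ μInf lam₀ lamInf : ℝ) (hlam₀ : |lam₀| < 1) (hlamInf : |lamInf| < 1)
    (X : ℕ → Ω → ℝ)
    (hX0 : ∀ ω, X 0 ω = x₀)
    (hXrec : ∀ n ω, X (n + 1) ω = μ₀ + lam₀ * X n ω + ε (n + 1) ω)
    (g : ℝ → ℝ → ℝ)
    (hg : ∀ x y, g x y =
      (x - (y * (lam₀ + lamInf) + (μ₀ + μInf)) / 2) * (y * (lam₀ - lamInf) + (μ₀ - μInf))) :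
    Tendsto
      (fun n : ℕ => (1 / (n : ℝ)) * ∑ i ∈ Finset.range n, ∫ ω, g (X (i + 1) ω) (X i ω) ∂P)
      atTop
      (𝓝 ((lam₀ - lamInf) ^ 2 / (2 * (1 - lam₀ ^ 2)) +
        ((1 - lamInf) ^ 2 / 2) * (μ₀ / (1 - lam₀) - μInf / (1 - lamInf)) ^ 2)) := by
  -- nonvanishing denominators
  have hl1 : (1:ℝ) - lam₀ ≠ 0 := by
    have := abs_lt.mp hlam₀; intro h; linarith [this.2]
  have hl2 : (1:ℝ) - lam₀ ^ 2 ≠ 0 := by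
    have h := abs_lt.mp hlam₀
    have : lam₀ ^ 2 < 1 := by nlinarith [h.1, h.2]
    intro hc; linarith
  have hlinf : (1:ℝ) - lamInf ≠ 0 := by
    have := abs_lt.mp hlamInf; intro h; linarith [this.2]
  -- measurability of X
  have hXm : ∀ n, Measurable (X n) := by
    intro n
    induction n with
    | zero => have : X 0 = fun _ => x₀ := funext hX0
              rw [this]; exact measurable_const
    | succ n ih =>
        have : X (n+1) = fun ω => μ₀ + lam₀ * X n ω + ε (n+1) ω := funext (hXrec n)
        rw [this]
        exact (measurable_const.add (ih.const_mul lam₀)).add (hmeas (n+1))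
  -- L² bounds on noise
  have hεL2 : ∀ n, MemLp (ε n) 2 P := by
    intro n
    have h1 : MemLp id 2 (P.map (ε n)) := by rw [hgauss n]; exact gauss_memℒp_two
    exact (memLp_map_measure_iff aestronglyMeasurable_id (hmeas n).aemeasurable).mp h1
  have hεint : ∀ n, Integrable (ε n) P := fun n =>
    memLp_one_iff_integrable.mp ((hεL2 n).mono_exponent one_le_two)
  have hεmean : ∀ n, ∫ ω, ε n ω ∂P = 0 := by
    intro n
    have h1 : ∫ x, x ∂(P.map (ε n)) = ∫ ω, ε n ω ∂P :=
      integral_map (hmeas n).aemeasurable aestronglyMeasurable_id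
    rw [← h1, hgauss n, gauss_mean]
  have hεsq : ∀ n, ∫ ω, (ε n ω) ^ 2 ∂P = 1 := by
    intro n
    have h1 : ∫ x, x ^ 2 ∂(P.map (ε n)) = ∫ ω, (ε n ω) ^ 2 ∂P :=
      integral_map (hmeas n).aemeasurable
        (measurable_id.pow_const 2).aestronglyMeasurable
    rw [← h1, hgauss n, gauss_sq]
  -- L² bound on X
  have hXL2 : ∀ n, MemLp (X n) 2 P := by
    intro n
    induction n with
    | zero => have : X 0 = fun _ => x₀ := funext hX0
              rw [this]; exact memLp_const x₀
    | succ n ih =>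
        have h : X (n+1) = fun ω => (μ₀ + lam₀ * X n ω) + ε (n+1) ω := funext (hXrec n)
        rw [h]
        exact ((memLp_const μ₀).add (ih.const_mul lam₀)).add (hεL2 (n+1))
  have hXint : ∀ n, Integrable (X n) P := fun n =>
    memLp_one_iff_integrable.mp ((hXL2 n).mono_exponent one_le_two)
  have hXsqint : ∀ n, Integrable (fun ω => (X n ω) ^ 2) P := fun n =>
    (memLp_two_iff_integrable_sq (hXm n).aestronglyMeasurable).mp (hXL2 n)
  have hXεint : ∀ n, Integrable (fun ω => X n ω * ε (n+1) ω) P := by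
    intro n
    have h1 : MemLp (X n • ε (n+1)) 1 P :=
      (hεL2 (n+1)).smul (hXL2 n)
    exact memLp_one_iff_integrable.mp h1
  -- explicit representation
  set c : ℕ → ℝ := fun n => lam₀ ^ n * x₀ + μ₀ * ∑ j ∈ Finset.range n, lam₀ ^ j with hc
  have hrep : ∀ n ω, X n ω = c n + ∑ i ∈ Finset.Icc 1 n, lam₀ ^ (n - i) * ε i ω := by
    intro n
    induction n with
    | zero => intro ω; simp [hX0 ω, hc]
    | succ n ih =>
        intro ω
        rw [hXrec n ω, ih ω, Finset.sum_Icc_succ_top (Nat.le_add_left 1 n)]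
        have hsum : ∑ i ∈ Finset.Icc 1 n, lam₀ ^ (n + 1 - i) * ε i ω
            = lam₀ * ∑ i ∈ Finset.Icc 1 n, lam₀ ^ (n - i) * ε i ω := by
          rw [Finset.mul_sum]
          refine Finset.sum_congr rfl fun i hi => ?_
          obtain ⟨h1, h2⟩ := Finset.mem_Icc.mp hi
          rw [show n + 1 - i = (n - i) + 1 by omega, pow_succ]
          ring
        rw [hsum]
        have hcs : c (n+1) = μ₀ + lam₀ * c n := by
          simp only [hc, geom_sum_succ]
          ring
        rw [hcs, show n + 1 - (n+1) = 0 by omega, pow_zero]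
        ring
  -- independence of X n and ε (n+1)
  have hindXε : ∀ n, IndepFun (X n) (ε (n+1)) P := by
    intro n
    set h : ℕ → Ω → ℝ := fun i ω => lam₀ ^ (n - i) * ε i ω with hh
    have hmh : ∀ i, Measurable (h i) := fun i => (hmeas i).const_mul _
    have hih : iIndepFun h P :=
      hindep.comp (fun i (x : ℝ) => lam₀ ^ (n - i) * x)
        (fun i => measurable_id.const_mul _)
    have hS : IndepFun (∑ j ∈ Finset.Icc 1 n, h j) (h (n+1)) P :=
      hih.indepFun_finset_sum_of_notMem hmh (by simp)
    have h2 : h (n+1) = ε (n+1) := by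
      funext ω; simp [hh, show n - (n+1) = 0 by omega]
    have h4 : X n = ((fun y : ℝ => c n + y) ∘ (∑ j ∈ Finset.Icc 1 n, h j)) := by
      funext ω
      simp only [Function.comp_apply, Finset.sum_apply]
      exact hrep n ω
    rw [h4, ← h2]
    exact hS.comp (by fun_prop : Measurable fun y : ℝ => c n + y) measurable_id
  have hXεzero : ∀ n, ∫ ω, X n ω * ε (n+1) ω ∂P = 0 := by
    intro n
    have h1 : ∫ ω, (X n * ε (n+1)) ω ∂P = (∫ ω, X n ω ∂P) * ∫ ω, ε (n+1) ω ∂P :=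
      (hindXε n).integral_mul_eq_mul_integral (hXm n).aestronglyMeasurable
        (hmeas (n+1)).aestronglyMeasurable
    have h2 : (fun ω => X n ω * ε (n+1) ω) = X n * ε (n+1) := rfl
    rw [h2, h1, hεmean (n+1), mul_zero]
  -- first and second moments
  set a : ℕ → ℝ := fun n => ∫ ω, X n ω ∂P with ha
  set b : ℕ → ℝ := fun n => ∫ ω, (X n ω) ^ 2 ∂P with hb
  have haRec : ∀ n, a (n+1) = μ₀ + lam₀ * a n := by
    intro n
    have h1 : (fun ω => X (n+1) ω) = fun ω => (μ₀ + lam₀ * X n ω) + ε (n+1) ω :=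
      funext (hXrec n)
    have j1 : Integrable (fun ω => lam₀ * X n ω) P := (hXint n).const_mul lam₀
    have j2 : Integrable (fun ω => μ₀ + lam₀ * X n ω) P := (integrable_const μ₀).add j1
    simp only [ha, h1]
    rw [integral_add j2 (hεint (n+1)), integral_add (integrable_const μ₀) j1,
      integral_const, integral_const_mul, hεmean (n+1)]
    simp
  have hbRec : ∀ n, b (n+1) = lam₀ ^ 2 * b n + 2 * μ₀ * lam₀ * a n + (μ₀ ^ 2 + 1) := by
    intro n
    have h1 : (fun ω => (X (n+1) ω) ^ 2) = fun ω =>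
        (μ₀ ^ 2 + (2 * μ₀ * lam₀) * X n ω + lam₀ ^ 2 * (X n ω) ^ 2)
        + ((2 * μ₀) * ε (n+1) ω + (2 * lam₀) * (X n ω * ε (n+1) ω))
        + (ε (n+1) ω) ^ 2 := by
      funext ω; rw [hXrec n ω]; ring
    have k1 : Integrable (fun ω => (2 * μ₀ * lam₀) * X n ω) P := (hXint n).const_mul _
    have k2 : Integrable (fun ω => lam₀ ^ 2 * (X n ω) ^ 2) P := (hXsqint n).const_mul _
    have k3 : Integrable (fun ω => μ₀ ^ 2 + (2 * μ₀ * lam₀) * X n ω) P :=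
      (integrable_const _).add k1
    have i1 : Integrable (fun ω => μ₀ ^ 2 + (2 * μ₀ * lam₀) * X n ω
        + lam₀ ^ 2 * (X n ω) ^ 2) P := k3.add k2
    have k4 : Integrable (fun ω => (2 * μ₀) * ε (n+1) ω) P := (hεint (n+1)).const_mul _
    have k5 : Integrable (fun ω => (2 * lam₀) * (X n ω * ε (n+1) ω)) P :=
      (hXεint n).const_mul _
    have i2 : Integrable (fun ω => (2 * μ₀) * ε (n+1) ω
        + (2 * lam₀) * (X n ω * ε (n+1) ω)) P := k4.add k5
    have i3 : Integrable (fun ω => (ε (n+1) ω) ^ 2) P :=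
      (memLp_two_iff_integrable_sq (hmeas (n+1)).aestronglyMeasurable).mp (hεL2 (n+1))
    have i12 : Integrable (fun ω => (μ₀ ^ 2 + (2 * μ₀ * lam₀) * X n ω
        + lam₀ ^ 2 * (X n ω) ^ 2)
        + ((2 * μ₀) * ε (n+1) ω + (2 * lam₀) * (X n ω * ε (n+1) ω))) P := i1.add i2
    simp only [hb, h1]
    rw [integral_add i12 i3, integral_add i1 i2, integral_add k3 k2,
      integral_add (integrable_const _) k1, integral_add k4 k5,
      integral_const, integral_const_mul, integral_const_mul, integral_const_mul,
      integral_const_mul, hεmean (n+1), hXεzero n, hεsq (n+1)]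
    simp only [smul_eq_mul, measure_univ, probReal_univ, ENNReal.toReal_one, one_mul, mul_zero, add_zero]
    ring
  -- expected instantaneous log-likelihood ratio
  have hEg : ∀ n, ∫ ω, g (X (n+1) ω) (X n ω) ∂P
      = (lam₀ - lamInf) ^ 2 / 2 * b n + (lam₀ - lamInf) * (μ₀ - μInf) * a n
        + (μ₀ - μInf) ^ 2 / 2 := by
    intro n
    have h1 : (fun ω => g (X (n+1) ω) (X n ω)) = fun ω =>
        ((lam₀ - lamInf) ^ 2 / 2 * (X n ω) ^ 2
          + (lam₀ - lamInf) * (μ₀ - μInf) * X n ω + (μ₀ - μInf) ^ 2 / 2)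
        + ((lam₀ - lamInf) * (X n ω * ε (n+1) ω) + (μ₀ - μInf) * ε (n+1) ω) := by
      funext ω; rw [hg, hXrec n ω]; ring
    have k1 : Integrable (fun ω => (lam₀ - lamInf) ^ 2 / 2 * (X n ω) ^ 2) P :=
      (hXsqint n).const_mul _
    have k2 : Integrable (fun ω => (lam₀ - lamInf) * (μ₀ - μInf) * X n ω) P :=
      (hXint n).const_mul _
    have k3 : Integrable (fun ω => (lam₀ - lamInf) ^ 2 / 2 * (X n ω) ^ 2
        + (lam₀ - lamInf) * (μ₀ - μInf) * X n ω) P := k1.add k2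
    have i1 : Integrable (fun ω => (lam₀ - lamInf) ^ 2 / 2 * (X n ω) ^ 2
        + (lam₀ - lamInf) * (μ₀ - μInf) * X n ω + (μ₀ - μInf) ^ 2 / 2) P :=
      k3.add (integrable_const _)
    have k4 : Integrable (fun ω => (lam₀ - lamInf) * (X n ω * ε (n+1) ω)) P :=
      (hXεint n).const_mul _
    have k5 : Integrable (fun ω => (μ₀ - μInf) * ε (n+1) ω) P := (hεint (n+1)).const_mul _
    have i2 : Integrable (fun ω => (lam₀ - lamInf) * (X n ω * ε (n+1) ω)
        + (μ₀ - μInf) * ε (n+1) ω) P := k4.add k5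
    rw [h1, integral_add i1 i2, integral_add k3 (integrable_const _), integral_add k1 k2,
      integral_add k4 k5,
      integral_const, integral_const_mul, integral_const_mul, integral_const_mul,
      integral_const_mul, hεmean (n+1), hXεzero n]
    simp only [smul_eq_mul, measure_univ, probReal_univ, ENNReal.toReal_one, one_mul, mul_zero, add_zero]
    rfl
  -- closed forms for the moments
  set m : ℝ := μ₀ / (1 - lam₀) with hm
  have ha0 : a 0 = x₀ := by
    have h0 : (fun ω => X 0 ω) = fun _ => x₀ := funext hX0
    simp only [ha, h0]; simp
  have hb0 : b 0 = x₀ ^ 2 := by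
    have h0 : (fun ω => (X 0 ω) ^ 2) = fun _ => x₀ ^ 2 := by funext ω; rw [hX0 ω]
    simp only [hb, h0]; simp
  have haF : ∀ n, a n = m + (x₀ - m) * lam₀ ^ n := by
    intro n
    induction n with
    | zero => simp only [pow_zero, mul_one, ha0]; ring
    | succ n ih =>
        have hm1 : μ₀ = (1 - lam₀) * m := by rw [hm]; field_simp
        rw [haRec n, ih]
        linear_combination hm1
  set s : ℝ := 1 / (1 - lam₀ ^ 2) + m ^ 2 with hs
  set A : ℝ := 2 * μ₀ * (x₀ - m) / (1 - lam₀) with hA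
  set B : ℝ := x₀ ^ 2 - s - A with hB
  have hbF : ∀ n, b n = s + A * lam₀ ^ n + B * (lam₀ ^ 2) ^ n := by
    intro n
    induction n with
    | zero => simp only [pow_zero, mul_one, hb0, hB]; ring
    | succ n ih =>
        have hm1 : μ₀ = (1 - lam₀) * m := by rw [hm]; field_simp
        have hs1 : lam₀ ^ 2 * s + 2 * μ₀ * lam₀ * m + (μ₀ ^ 2 + 1) = s := by
          rw [hs, hm1]
          field_simp
          ring
        have hA1 : lam₀ ^ 2 * A + 2 * μ₀ * lam₀ * (x₀ - m) = lam₀ * A := by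
          rw [hA]
          field_simp
          ring
        rw [hbRec n, ih, haF n]
        linear_combination hs1 + lam₀ ^ n * hA1 + (lam₀ ^ 2) ^ n * (rfl : lam₀ ^ 2 * B = lam₀ ^ 2 * B)
  -- convergence of the one-step expectations
  set K : ℝ := (lam₀ - lamInf) ^ 2 / (2 * (1 - lam₀ ^ 2)) +
      ((1 - lamInf) ^ 2 / 2) * (μ₀ / (1 - lam₀) - μInf / (1 - lamInf)) ^ 2 with hK
  have hKeq : K = (lam₀ - lamInf) ^ 2 / 2 * s + (lam₀ - lamInf) * (μ₀ - μInf) * m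
      + (μ₀ - μInf) ^ 2 / 2 := by
    rw [hK, hs, hm]
    field_simp
    ring
  have hTend : Tendsto (fun n : ℕ => ∫ ω, g (X (n+1) ω) (X n ω) ∂P) atTop (𝓝 K) := by
    have h1 : (fun n : ℕ => ∫ ω, g (X (n+1) ω) (X n ω) ∂P) = fun n : ℕ =>
        K + (((lam₀ - lamInf) ^ 2 / 2 * A + (lam₀ - lamInf) * (μ₀ - μInf) * (x₀ - m)) * lam₀ ^ n
          + ((lam₀ - lamInf) ^ 2 / 2 * B) * (lam₀ ^ 2) ^ n) := by
      funext n
      rw [hEg n, hbF n, haF n, hKeq]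
      ring
    rw [h1]
    have h2 : Tendsto (fun n : ℕ => lam₀ ^ n) atTop (𝓝 0) :=
      tendsto_pow_atTop_nhds_zero_of_abs_lt_one hlam₀
    have h3 : Tendsto (fun n : ℕ => (lam₀ ^ 2) ^ n) atTop (𝓝 0) := by
      refine tendsto_pow_atTop_nhds_zero_of_abs_lt_one ?_
      have h := abs_lt.mp hlam₀
      rw [abs_of_nonneg (sq_nonneg lam₀)]
      nlinarith [h.1, h.2]
    have h4 := ((h2.const_mul ((lam₀ - lamInf) ^ 2 / 2 * A
        + (lam₀ - lamInf) * (μ₀ - μInf) * (x₀ - m))).add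
      (h3.const_mul ((lam₀ - lamInf) ^ 2 / 2 * B)))
    simpa using tendsto_const_nhds.add h4
  -- Cesàro averaging
  have h5 := hTend.cesaro
  simp only [one_div]
  exact h5
end

section
/- Fix μ ∈ ℝ and λ∞ with |λ∞| < 1, and define f(λ₀) := ((λ₀−λ∞)²/(2(1−λ₀²)))·[1 + μ²·(1+λ₀)/(1−λ₀)] for λ₀ ∈ (−1, 1). Then f is strictly decreasing on (−1, λ∞], strictly increasing on [λ∞, 1), and attains its global minimum value 0 uniquely at λ₀ = λ∞. -/
private lemma ar1_deriv (μ L : ℝ) (hL1 : -1 < L) (hL2 : L < 1)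
    {x : ℝ} (hx1 : -1 < x) (hx2 : x < 1) :
    HasDerivAt
      (fun x : ℝ => ((x - L) ^ 2 / (2 * (1 - x ^ 2))) * (1 + μ ^ 2 * (1 + x) / (1 - x)))
      ((x - L) * (4 * ((1 - x) ^ 2 * (1 - L * x) + μ ^ 2 * (1 - L) * (1 + x) ^ 2 * (1 - x))) /
        (4 * (1 + x) ^ 2 * (1 - x) ^ 4)) x := by
  have h1x : (1 : ℝ) - x ≠ 0 := by intro h; linarith [sub_eq_zero.mp h]
  have h1x' : (0:ℝ) < 1 - x := by linarith
  have h1px : (0:ℝ) < 1 + x := by linarith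
  have hq0 : (2 * (1 - x ^ 2)) ≠ 0 := by nlinarith
  have hp : HasDerivAt (fun y : ℝ => (y - L) ^ 2) (2 * (x - L)) x := by
    simpa using ((hasDerivAt_id x).sub_const L).fun_pow 2
  have hq : HasDerivAt (fun y : ℝ => 2 * (1 - y ^ 2)) (2 * (-(2 * x))) x := by
    have h2 : HasDerivAt (fun y : ℝ => 1 - y ^ 2) (-(2 * x)) x := by
      simpa using (hasDerivAt_pow 2 x).const_sub 1
    exact h2.const_mul 2
  have hnum : HasDerivAt (fun y : ℝ => μ ^ 2 * (1 + y)) (μ ^ 2 * 1) x := by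
    simpa using ((hasDerivAt_id x).const_add 1).const_mul (μ ^ 2)
  have hden : HasDerivAt (fun y : ℝ => 1 - y) (-1) x := by
    simpa using (hasDerivAt_id x).const_sub 1
  have hr : HasDerivAt (fun y : ℝ => 1 + μ ^ 2 * (1 + y) / (1 - y))
      ((μ ^ 2 * 1 * (1 - x) - μ ^ 2 * (1 + x) * (-1)) / (1 - x) ^ 2) x :=
    (hnum.div hden h1x).const_add 1
  have hfull := (hp.fun_div hq hq0).fun_mul hr
  refine hfull.congr_deriv ?_
  have h1px0 : (1:ℝ) + x ≠ 0 := ne_of_gt h1px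
  have hsq : (1:ℝ) - x ^ 2 ≠ 0 := by nlinarith
  field_simp
  ring

/-- In the equal-means case, the Kullback--Leibler number
`f(λ₀) = ((λ₀-λ∞)²/(2(1-λ₀²)))·[1 + μ²(1+λ₀)/(1-λ₀)]`, viewed as a function of the
post-change correlation `λ₀ ∈ (-1, 1)`, is strictly decreasing on `(-1, λ∞]`, strictly
increasing on `[λ∞, 1)`, and attains its global minimum value `0` uniquely at `λ₀ = λ∞`. -/
theorem ar1_kl_equal_means_monotonicity_min
    (μ lamInf : ℝ) (hlamInf : |lamInf| < 1) :
    StrictAntiOn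
      (fun x : ℝ => ((x - lamInf) ^ 2 / (2 * (1 - x ^ 2))) * (1 + μ ^ 2 * (1 + x) / (1 - x)))
      (Set.Ioc (-1 : ℝ) lamInf) ∧
    StrictMonoOn
      (fun x : ℝ => ((x - lamInf) ^ 2 / (2 * (1 - x ^ 2))) * (1 + μ ^ 2 * (1 + x) / (1 - x)))
      (Set.Ico lamInf (1 : ℝ)) ∧
    ((lamInf - lamInf) ^ 2 / (2 * (1 - lamInf ^ 2))) *
        (1 + μ ^ 2 * (1 + lamInf) / (1 - lamInf)) = 0 ∧
    ∀ x ∈ Set.Ioo (-1 : ℝ) 1, x ≠ lamInf →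
      0 < ((x - lamInf) ^ 2 / (2 * (1 - x ^ 2))) * (1 + μ ^ 2 * (1 + x) / (1 - x)) := by
  obtain ⟨hL1, hL2⟩ := abs_lt.mp hlamInf
  set f : ℝ → ℝ :=
    fun x : ℝ => ((x - lamInf) ^ 2 / (2 * (1 - x ^ 2))) * (1 + μ ^ 2 * (1 + x) / (1 - x)) with hf
  have hQpos : ∀ x : ℝ, -1 < x → x < 1 →
      0 < 4 * ((1 - x) ^ 2 * (1 - lamInf * x) + μ ^ 2 * (1 - lamInf) * (1 + x) ^ 2 * (1 - x)) := by
    intro x hx1 hx2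
    have h1 : 0 < (1 - x) ^ 2 * (1 - lamInf * x) := by
      have : 0 < 1 - lamInf * x := by nlinarith
      have h2 : (0:ℝ) < (1 - x) ^ 2 := pow_pos (by linarith) 2
      exact mul_pos h2 this
    have h2 : 0 ≤ μ ^ 2 * (1 - lamInf) * (1 + x) ^ 2 * (1 - x) :=
      mul_nonneg (mul_nonneg (mul_nonneg (sq_nonneg μ) (by linarith)) (sq_nonneg _)) (by linarith)
    linarith
  have hDenpos : ∀ x : ℝ, -1 < x → x < 1 → (0:ℝ) < 4 * (1 + x) ^ 2 * (1 - x) ^ 4 := by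
    intro x hx1 hx2
    have h1 : (0:ℝ) < 1 + x := by linarith
    have h2 : (0:ℝ) < 1 - x := by linarith
    positivity
  have hcont : ∀ x : ℝ, -1 < x → x < 1 → ContinuousAt f x := fun x hx1 hx2 =>
    (ar1_deriv μ lamInf hL1 hL2 hx1 hx2).continuousAt
  refine ⟨?_, ?_, ?_, ?_⟩
  · apply strictAntiOn_of_deriv_neg (convex_Ioc _ _)
    · intro x hx
      exact (hcont x hx.1 (lt_of_le_of_lt hx.2 hL2)).continuousWithinAt
    · intro x hx
      rw [interior_Ioc] at hx
      rw [(ar1_deriv μ lamInf hL1 hL2 hx.1 (hx.2.trans hL2)).deriv]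
      exact div_neg_of_neg_of_pos
        (mul_neg_of_neg_of_pos (by linarith [hx.2])
          (hQpos x hx.1 (hx.2.trans hL2)))
        (hDenpos x hx.1 (hx.2.trans hL2))
  · apply strictMonoOn_of_deriv_pos (convex_Ico _ _)
    · intro x hx
      exact (hcont x (lt_of_lt_of_le hL1 hx.1) hx.2).continuousWithinAt
    · intro x hx
      rw [interior_Ico] at hx
      rw [(ar1_deriv μ lamInf hL1 hL2 (hL1.trans hx.1) hx.2).deriv]
      exact div_pos
        (mul_pos (by linarith [hx.1]) (hQpos x (hL1.trans hx.1) hx.2))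
        (hDenpos x (hL1.trans hx.1) hx.2)
  · simp
  · intro x hx hne
    have hx1 := hx.1; have hx2 := hx.2
    have h1 : 0 < (x - lamInf) ^ 2 / (2 * (1 - x ^ 2)) := by
      apply div_pos
      · have hne' : x - lamInf ≠ 0 := sub_ne_zero.mpr hne
        positivity
      · nlinarith
    have h2 : 0 < 1 + μ ^ 2 * (1 + x) / (1 - x) := by
      have : 0 ≤ μ ^ 2 * (1 + x) / (1 - x) :=
        div_nonneg (mul_nonneg (sq_nonneg μ) (by linarith)) (by linarith)
      linarith
    exact mul_pos h1 h2
end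

section
/- Fix μ₀ ∈ ℝ with μ₀² ≠ 1, let f(λ₀) := (1/(2(1−λ₀)))·[λ₀²/(1+λ₀) + μ₀²/(1−λ₀)] for λ₀ ∈ (−1, 1), and let λ_crit := (√(8μ₀²+1) − (2μ₀²+1))/(2(μ₀²−1)). Then λ_crit ∈ (−1, 1) and f(λ_crit) ≤ f(λ₀) for every λ₀ ∈ (−1, 1); that is, f is globally minimized over (−1, 1) at λ_crit. -/
/-- In the i.i.d. pre-change case, the Kullback--Leibler number
`f(λ₀) = (1/(2(1-λ₀)))·[λ₀²/(1+λ₀) + μ₀²/(1-λ₀)]` is globally minimized over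
`λ₀ ∈ (-1, 1)` at the worst-case post-change correlation
`λ_crit = (√(8μ₀²+1) - (2μ₀²+1))/(2(μ₀²-1))` (defined for `μ₀² ≠ 1`). -/
theorem ar1_lambda_crit_global_min
    (μ₀ : ℝ) (hμ : μ₀ ^ 2 ≠ 1) :
    (Real.sqrt (8 * μ₀ ^ 2 + 1) - (2 * μ₀ ^ 2 + 1)) / (2 * (μ₀ ^ 2 - 1)) ∈
      Set.Ioo (-1 : ℝ) 1 ∧
    ∀ lam₀ ∈ Set.Ioo (-1 : ℝ) 1,
      (1 / (2 * (1 - (Real.sqrt (8 * μ₀ ^ 2 + 1) - (2 * μ₀ ^ 2 + 1)) / (2 * (μ₀ ^ 2 - 1))))) *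
          (((Real.sqrt (8 * μ₀ ^ 2 + 1) - (2 * μ₀ ^ 2 + 1)) / (2 * (μ₀ ^ 2 - 1))) ^ 2 /
              (1 + (Real.sqrt (8 * μ₀ ^ 2 + 1) - (2 * μ₀ ^ 2 + 1)) / (2 * (μ₀ ^ 2 - 1))) +
            μ₀ ^ 2 /
              (1 - (Real.sqrt (8 * μ₀ ^ 2 + 1) - (2 * μ₀ ^ 2 + 1)) / (2 * (μ₀ ^ 2 - 1)))) ≤
        (1 / (2 * (1 - lam₀))) * (lam₀ ^ 2 / (1 + lam₀) + μ₀ ^ 2 / (1 - lam₀)) := by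
  set m : ℝ := μ₀ ^ 2 with hmdef
  have hm0 : 0 ≤ m := sq_nonneg μ₀
  set s : ℝ := Real.sqrt (8 * m + 1) with hsdef
  have hs0 : 0 ≤ s := Real.sqrt_nonneg _
  have hs2 : s ^ 2 = 8 * m + 1 := Real.sq_sqrt (by linarith)
  have hd : (2 : ℝ) * (m - 1) ≠ 0 := by
    intro h
    apply hμ
    have : m = 1 := by linarith [mul_eq_zero.mp h]
    simpa [hmdef] using this
  set c : ℝ := (s - (2 * m + 1)) / (2 * (m - 1)) with hcdef
  -- quadratic relation satisfied by c
  have hQ : (m - 1) * c ^ 2 + (2 * m + 1) * c + m = 0 := by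
    rw [hcdef]
    field_simp
    nlinarith [hs2]
  -- bounds on c
  have hc0 : c ≤ 0 := by
    rcases lt_or_gt_of_ne hμ with h | h
    · -- m < 1 : numerator ≥ 0, denominator < 0
      have hnum : 0 ≤ s - (2 * m + 1) := by nlinarith
      exact div_nonpos_of_nonneg_of_nonpos hnum (by linarith)
    · -- m > 1 : numerator ≤ 0, denominator > 0
      have hnum : s - (2 * m + 1) ≤ 0 := by nlinarith
      exact div_nonpos_of_nonpos_of_nonneg hnum (by linarith)
  have hc1 : -1 < c := by
    rcases lt_or_gt_of_ne hμ with h | h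
    · rw [hcdef, lt_div_iff_of_neg (by linarith : 2 * (m - 1) < 0)]
      nlinarith
    · rw [hcdef, lt_div_iff₀ (by linarith : (0:ℝ) < 2 * (m - 1))]
      nlinarith
  have hc2 : c < 1 := lt_of_le_of_lt hc0 one_pos
  have key : ∀ x : ℝ, -1 < x → x < 1 →
      (1 / (2 * (1 - x))) * (x ^ 2 / (1 + x) + m / (1 - x)) =
        (x ^ 2 * (1 - x) + m * (1 + x)) / (2 * (1 - x) ^ 2 * (1 + x)) := by
    intro x h1 h2
    have h1' : (1 : ℝ) - x ≠ 0 := by linarith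
    have h2' : (1 : ℝ) + x ≠ 0 := by linarith
    field_simp
  refine ⟨⟨hc1, hc2⟩, ?_⟩
  intro l hl
  obtain ⟨hl1, hl2⟩ := hl
  rw [key c hc1 hc2, key l hl1 hl2]
  rw [div_le_div_iff₀
      (by nlinarith [sq_nonneg (1-c), sq_nonneg (1-l), mul_pos (mul_pos two_pos (pow_pos (by linarith : (0:ℝ) < 1 - c) 2)) (by linarith : (0:ℝ) < 1 + c), mul_pos (mul_pos two_pos (pow_pos (by linarith : (0:ℝ) < 1 - l) 2)) (by linarith : (0:ℝ) < 1 + l)] : (0:ℝ) < 2 * (1 - c) ^ 2 * (1 + c))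
      (by nlinarith [sq_nonneg (1-c), sq_nonneg (1-l), mul_pos (mul_pos two_pos (pow_pos (by linarith : (0:ℝ) < 1 - c) 2)) (by linarith : (0:ℝ) < 1 + c), mul_pos (mul_pos two_pos (pow_pos (by linarith : (0:ℝ) < 1 - l) 2)) (by linarith : (0:ℝ) < 1 + l)] : (0:ℝ) < 2 * (1 - l) ^ 2 * (1 + l))]
  have hfac : (l ^ 2 * (1 - l) + m * (1 + l)) * ((1 - c) ^ 2 * (1 + c)) -
      (c ^ 2 * (1 - c) + m * (1 + c)) * ((1 - l) ^ 2 * (1 + l)) =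
      (m * (1 + c) + (1 - c)) * (l - c) ^ 2 * (1 - 2 * c - l) := by
    linear_combination (2 * (l - c) * (1 - c)) * hQ
  have hpos : 0 ≤ (m * (1 + c) + (1 - c)) * (l - c) ^ 2 * (1 - 2 * c - l) := by
    apply mul_nonneg (mul_nonneg _ (sq_nonneg _)) (by linarith)
    nlinarith
  nlinarith [hfac, hpos]
end

section
/- Fix μ₀ ∈ ℝ, let f(λ₀) := (1/(2(1−λ₀)))·[λ₀²/(1+λ₀) + μ₀²/(1−λ₀)] for λ₀ ∈ (−1, 1), and let λ_lower := max(−1, (1/2)·(1 − √((9μ₀²+1)/(μ₀²+1)))). Then for every λ₀ ∈ (−1, 1): f(λ₀) ≤ μ₀²/2 if and only if λ_lower ≤ λ₀ ≤ 0. -/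
/-- In the i.i.d. pre-change case, the Kullback--Leibler number
`f(λ₀) = (1/(2(1-λ₀)))·[λ₀²/(1+λ₀) + μ₀²/(1-λ₀)]` is at most the i.i.d. value `μ₀²/2`
exactly when `λ₀` lies between `λ_lower = max(-1, (1/2)(1 - √((9μ₀²+1)/(μ₀²+1))))`
and `λ_upper = 0`. -/
theorem ar1_kl_below_iid_iff
    (μ₀ : ℝ) :
    ∀ lam₀ ∈ Set.Ioo (-1 : ℝ) 1,
      ((1 / (2 * (1 - lam₀))) * (lam₀ ^ 2 / (1 + lam₀) + μ₀ ^ 2 / (1 - lam₀)) ≤ μ₀ ^ 2 / 2 ↔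
        max (-1 : ℝ) ((1 / 2) * (1 - Real.sqrt ((9 * μ₀ ^ 2 + 1) / (μ₀ ^ 2 + 1)))) ≤ lam₀ ∧
          lam₀ ≤ 0) := by
  intro lam hlam
  obtain ⟨hl, hr⟩ := hlam
  set s := Real.sqrt ((9 * μ₀ ^ 2 + 1) / (μ₀ ^ 2 + 1)) with hsdef
  have hμ1 : (0:ℝ) < μ₀ ^ 2 + 1 := by positivity
  have hs0 : 0 ≤ s := Real.sqrt_nonneg _
  have hs2 : s ^ 2 = (9 * μ₀ ^ 2 + 1) / (μ₀ ^ 2 + 1) := by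
    rw [hsdef, Real.sq_sqrt (by positivity)]
  have hss : (μ₀ ^ 2 + 1) * s ^ 2 = 9 * μ₀ ^ 2 + 1 := by
    rw [hs2]; field_simp
  have hsq1 : 1 ≤ s ^ 2 := by nlinarith [sq_nonneg μ₀]
  have hsq9 : s ^ 2 < 9 := by nlinarith [sq_nonneg μ₀]
  have hs1 : 1 ≤ s := by nlinarith
  have hs3 : s < 3 := by nlinarith
  have hmax : max (-1 : ℝ) ((1 / 2) * (1 - s)) = (1 / 2) * (1 - s) := by
    apply max_eq_right; linarith
  rw [hmax]
  have ha : (0:ℝ) < 1 - lam := by linarith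
  have hb : (0:ℝ) < 1 + lam := by linarith
  -- reduce to a polynomial inequality
  have hQ : lam * ((1 + μ₀ ^ 2) * lam ^ 2 - (1 + μ₀ ^ 2) * lam - 2 * μ₀ ^ 2)
      = (μ₀ ^ 2 + 1) * lam * (((1 - s) / 2 - lam) * ((1 + s) / 2 - lam)) := by
    linear_combination (lam / 4) * hss
  have hden : (0:ℝ) < 2 * (1 - lam) ^ 2 * (1 + lam) := by positivity
  have hdiff : μ₀ ^ 2 / 2 -
      (1 / (2 * (1 - lam))) * (lam ^ 2 / (1 + lam) + μ₀ ^ 2 / (1 - lam))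
      = (lam * ((1 + μ₀ ^ 2) * lam ^ 2 - (1 + μ₀ ^ 2) * lam - 2 * μ₀ ^ 2))
        / (2 * (1 - lam) ^ 2 * (1 + lam)) := by
    field_simp
    ring
  have hiff1 : (1 / (2 * (1 - lam))) * (lam ^ 2 / (1 + lam) + μ₀ ^ 2 / (1 - lam)) ≤ μ₀ ^ 2 / 2
      ↔ 0 ≤ lam * ((1 + μ₀ ^ 2) * lam ^ 2 - (1 + μ₀ ^ 2) * lam - 2 * μ₀ ^ 2) := by
    rw [← sub_nonneg, hdiff, le_div_iff₀ hden, zero_mul]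
  rw [hiff1, hQ]
  constructor
  · intro h
    have hv : 0 < (1 + s) / 2 - lam := by linarith
    have hlam0 : lam ≤ 0 := by
      by_contra hc
      push_neg at hc
      have hu : (1 - s) / 2 - lam < 0 := by linarith
      nlinarith [mul_pos (mul_pos hμ1 hc) hv]
    refine ⟨?_, hlam0⟩
    by_contra hc
    push_neg at hc
    have hu : 0 < (1 - s) / 2 - lam := by linarith
    have hlamneg : lam < 0 := by linarith
    nlinarith [mul_pos (mul_pos hu hv) (mul_pos hμ1 (neg_pos.mpr hlamneg))]
  · rintro ⟨h1, h2⟩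
    have hv : 0 ≤ (1 + s) / 2 - lam := by linarith
    have hu : (1 - s) / 2 - lam ≤ 0 := by linarith
    have huv : ((1 - s) / 2 - lam) * ((1 + s) / 2 - lam) ≤ 0 :=
      mul_nonpos_of_nonpos_of_nonneg hu hv
    have h3 : 0 ≤ lam * (((1 - s) / 2 - lam) * ((1 + s) / 2 - lam)) := by
      have := mul_nonneg (neg_nonneg.mpr h2) (neg_nonneg.mpr huv)
      linarith [this, neg_mul_neg lam (((1 - s) / 2 - lam) * ((1 + s) / 2 - lam))]
    rw [mul_assoc]
    exact mul_nonneg hμ1.le h3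
end

section
/- Fix μ₀ ∈ ℝ with μ₀² ≠ 1, and let λ_lower := max(−1, (1/2)·(1 − √((9μ₀²+1)/(μ₀²+1)))) and λ_crit := (√(8μ₀²+1) − (2μ₀²+1))/(2(μ₀²−1)). Then −1 < λ_lower ≤ λ_crit ≤ 0. -/
private lemma sq_le_imp (a b : ℝ) (hb : 0 ≤ b) (h : a ^ 2 ≤ b ^ 2) : a ≤ b := by
  nlinarith [sq_nonneg (a + b), sq_nonneg (a - b)]

set_option maxHeartbeats 1000000 in
/-- The lower cut-off `λ_lower = max(-1, (1/2)(1 - √((9μ₀²+1)/(μ₀²+1))))` and the worst-case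
post-change correlation `λ_crit = (√(8μ₀²+1) - (2μ₀²+1))/(2(μ₀²-1))` (for `μ₀² ≠ 1`) satisfy
`-1 < λ_lower ≤ λ_crit ≤ 0`. -/
theorem ar1_lambda_lower_le_crit_le_zero
    (μ₀ : ℝ) (hμ : μ₀ ^ 2 ≠ 1) :
    -1 < max (-1 : ℝ) ((1 / 2) * (1 - Real.sqrt ((9 * μ₀ ^ 2 + 1) / (μ₀ ^ 2 + 1)))) ∧
    max (-1 : ℝ) ((1 / 2) * (1 - Real.sqrt ((9 * μ₀ ^ 2 + 1) / (μ₀ ^ 2 + 1)))) ≤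
      (Real.sqrt (8 * μ₀ ^ 2 + 1) - (2 * μ₀ ^ 2 + 1)) / (2 * (μ₀ ^ 2 - 1)) ∧
    (Real.sqrt (8 * μ₀ ^ 2 + 1) - (2 * μ₀ ^ 2 + 1)) / (2 * (μ₀ ^ 2 - 1)) ≤ 0 := by
  set t := μ₀ ^ 2 with htdef
  have ht : 0 ≤ t := sq_nonneg μ₀
  have htp : (0 : ℝ) < t + 1 := by linarith
  set s := Real.sqrt ((9 * t + 1) / (t + 1)) with hsdef
  set r := Real.sqrt (8 * t + 1) with hrdef
  have hs : 0 ≤ s := Real.sqrt_nonneg _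
  have hr : 0 ≤ r := Real.sqrt_nonneg _
  have hs2 : s ^ 2 = (9 * t + 1) / (t + 1) := Real.sq_sqrt (by positivity)
  have hr2 : r ^ 2 = 8 * t + 1 := Real.sq_sqrt (by linarith)
  have hs2' : s ^ 2 * (t + 1) = 9 * t + 1 := by
    rw [hs2]; field_simp
  -- key: 9t+1 ≤ 3s(t+1)
  have key : 9 * t + 1 ≤ 3 * s * (t + 1) := by
    apply sq_le_imp _ _ (by positivity)
    nlinarith [hs2']
  have hs3 : s < 3 := by nlinarith [hs2', hs, htp]
  have hmax1 : -1 < max (-1 : ℝ) ((1 / 2) * (1 - s)) :=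
    lt_max_of_lt_right (by linarith)
  refine ⟨hmax1, ?_, ?_⟩
  · -- max ≤ λ_crit
    rcases lt_or_gt_of_ne hμ with h1 | h1
    · have hD : 2 * (t - 1) < 0 := by linarith
      apply max_le
      · rw [le_div_iff_of_neg hD]
        have hr3 : r ≤ 3 := sq_le_imp _ _ (by norm_num) (by nlinarith)
        nlinarith
      · rw [le_div_iff_of_neg hD]
        have hA0 : 0 ≤ 3 * t + s * (1 - t) := by
          have := mul_nonneg hs (by linarith : (0:ℝ) ≤ 1 - t)
          linarith
        have hid : (3 * t + s * (1 - t)) ^ 2 * (t + 1) - r ^ 2 * (t + 1)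
            = 2 * t * (1 - t) * (3 * s * (t + 1) - (9 * t + 1)) := by
          linear_combination (1 - t) ^ 2 * hs2' - (t + 1) * hr2
        have hprod : 0 ≤ 2 * t * (1 - t) * (3 * s * (t + 1) - (9 * t + 1)) := by
          apply mul_nonneg
          · apply mul_nonneg (by linarith) (by linarith)
          · linarith
        have hAr : r ^ 2 ≤ (3 * t + s * (1 - t)) ^ 2 := by
          have h : r ^ 2 * (t + 1) ≤ (3 * t + s * (1 - t)) ^ 2 * (t + 1) := by linarith
          exact le_of_mul_le_mul_right h htp
        have hrA : r ≤ 3 * t + s * (1 - t) := sq_le_imp _ _ hA0 hAr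
        nlinarith [hrA]
    · have hD : (0 : ℝ) < 2 * (t - 1) := by linarith
      apply max_le
      · rw [le_div_iff₀ hD]
        have hr3 : (3 : ℝ) ≤ r := sq_le_imp _ _ hr (by nlinarith)
        nlinarith
      · rw [le_div_iff₀ hD]
        have hid : r ^ 2 * (t + 1) - (3 * t - s * (t - 1)) ^ 2 * (t + 1)
            = 2 * t * (t - 1) * (3 * s * (t + 1) - (9 * t + 1)) := by
          linear_combination (t + 1) * hr2 - (t - 1) ^ 2 * hs2'
        have hprod : 0 ≤ 2 * t * (t - 1) * (3 * s * (t + 1) - (9 * t + 1)) := by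
          apply mul_nonneg
          · apply mul_nonneg (by linarith) (by linarith)
          · linarith
        have hAr : (3 * t - s * (t - 1)) ^ 2 ≤ r ^ 2 := by
          have h : (3 * t - s * (t - 1)) ^ 2 * (t + 1) ≤ r ^ 2 * (t + 1) := by linarith
          exact le_of_mul_le_mul_right h htp
        have hrA : 3 * t - s * (t - 1) ≤ r := sq_le_imp _ _ hr hAr
        nlinarith [hrA]
  · -- λ_crit ≤ 0
    rcases lt_or_gt_of_ne hμ with h1 | h1
    · apply div_nonpos_of_nonneg_of_nonpos
      · have : 2 * t + 1 ≤ r := sq_le_imp _ _ hr (by nlinarith)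
        linarith
      · linarith
    · apply div_nonpos_of_nonpos_of_nonneg
      · have : r ≤ 2 * t + 1 := sq_le_imp _ _ (by linarith) (by nlinarith)
        linarith
      · linarith
end
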